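/- arXiv:1308.5848 — 7 statements merged into one kernel-verified Lean document; each statement's English description precedes it below -/
import Mathlib

section
/- Let k be a field and let R be a unital associative prime k-algebra such that every nonzero two-sided ideal of R contains a nonzero idempotent e for which Z(eRe) is a field. If dim_k(R) < |k| (as cardinals), then the extended centroid of R is algebraic over k; concretely: for every nonzero two-sided ideal I of R and every k-linear map f : I → R satisfying f(r x) = r f(x) and f(x r) = f(x) r for all r ∈ R and x ∈ I, there exist n ≥ 1 and scalars c_0, …, c_n ∈ k, not all zero, such that Σ_{i=0}^{n} c_i f^{i}(x_1 x_2 ⋯ x_n) = 0 for all x_1, …, x_n ∈ I, where f^{i} denotes the i-fold iterate of f (well defined on such products since f(x y) = f(x) y ∈ I for x, y ∈ I). -/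
/-- `e` is a nonzero idempotent-corner center condition: the center of the corner
ring `eRe` is a field (with identity `e` and inverses lying in the center). -/
def CornerCenterIsField {R : Type} [Ring R] (e : R) : Prop :=
  e ≠ 0 ∧
  ∀ z : R, e * z * e = z → (∀ w : R, e * w * e = w → z * w = w * z) → z ≠ 0 →
    ∃ y : R, e * y * e = y ∧ (∀ w : R, e * w * e = w → y * w = w * y) ∧
      z * y = e ∧ y * z = e


/-- The extended centroid of the prime ring `R` is algebraic over `k`, expressed
concretely: every `(R,R)`-bimodule homomorphism `f` from a nonzero two-sided ideal
`I` to `R` (encoded as a function `R → R` which is `k`-linear and a bimodule map on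
`I`; every such partial map extends to such a function) satisfies a nontrivial
polynomial relation over `k` on products of elements of `I`. -/
def ExtCentroidAlgebraic (k : Type) [Field k] (R : Type) [Ring R] [Algebra k R] : Prop :=
  ∀ I : TwoSidedIdeal R, I ≠ ⊥ →
    ∀ f : R → R,
      (∀ x ∈ I, ∀ y ∈ I, f (x + y) = f x + f y) →
      (∀ (c : k) (x : R), x ∈ I → f (c • x) = c • f x) →
      (∀ (r x : R), x ∈ I → f (r * x) = r * f x) →
      (∀ (r x : R), x ∈ I → f (x * r) = f x * r) →
      ∃ (n : ℕ) (c : Fin (n + 1) → k), 1 ≤ n ∧ (∃ i, c i ≠ 0) ∧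
        ∀ x : Fin n → R, (∀ j, x j ∈ I) →
          ∑ i : Fin (n + 1), c i • f^[(i : ℕ)] (List.ofFn x).prod = 0

private lemma iter_key {R : Type} [Ring R] {I : TwoSidedIdeal R} {f : R → R}
    (hleft : ∀ (r x : R), x ∈ I → f (r * x) = r * f x)
    (hright : ∀ (r x : R), x ∈ I → f (x * r) = f x * r)
    {e q : R} (hqe : q * e = q)
    (hqa : ∀ x, x ∈ I → e * f x = q * x) :
    ∀ (i : ℕ) (L : List R), (∀ a ∈ L, a ∈ I) → i ≤ L.length →
      (e * f^[i] L.prod = q ^ i * (e * L.prod)) ∧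
      (∀ r : R, f^[i] (r * L.prod) = r * f^[i] L.prod) := by
  intro i
  induction i with
  | zero => intro L _ _; exact ⟨by simp, fun r => rfl⟩
  | succ i ih =>
    intro L hL hlen
    match L with
    | [] => simp at hlen
    | [a] =>
      have hi : i = 0 := by simp at hlen; omega
      subst hi
      have ha : a ∈ I := hL a (by simp)
      constructor
      · simp only [zero_add, Function.iterate_one, List.prod_singleton, pow_one]
        rw [hqa a ha, ← mul_assoc, hqe]
      · intro r
        simp only [zero_add, Function.iterate_one, List.prod_singleton]
        exact hleft r a ha
    | a :: b :: L' =>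
      have ha : a ∈ I := hL a (by simp)
      have hb : b ∈ I := hL b (by simp)
      have hMmem : ∀ c ∈ (f a * b) :: L', c ∈ I := by
        intro c hc
        rcases List.mem_cons.mp hc with h | h
        · exact h ▸ I.mul_mem_left _ _ hb
        · exact hL c (List.mem_cons_of_mem _ (List.mem_cons_of_mem _ h))
      have hMlen : i ≤ ((f a * b) :: L').length := by
        simp only [List.length_cons] at hlen ⊢; omega
      obtain ⟨IH1, IH2⟩ := ih ((f a * b) :: L') hMmem hMlen
      have hfL : f ((a :: b :: L').prod) = ((f a * b) :: L').prod := by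
        simp only [List.prod_cons]
        rw [hright (b * L'.prod) a ha, ← mul_assoc]
      constructor
      · rw [Function.iterate_succ_apply, hfL, IH1]
        have h2 : e * ((f a * b) :: L').prod = q * (a :: b :: L').prod := by
          simp only [List.prod_cons]
          rw [mul_assoc (f a) b, ← mul_assoc e, hqa a ha, mul_assoc]
        have h4 : q ^ (i + 1) * e = q ^ (i + 1) := by
          rw [pow_succ, mul_assoc, hqe]
        rw [h2, ← mul_assoc, ← pow_succ, ← mul_assoc, h4]
      · intro r
        have hra : r * a ∈ I := I.mul_mem_left _ _ ha
        have h3 : f (r * (a :: b :: L').prod) = r * ((f a * b) :: L').prod := by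
          simp only [List.prod_cons]
          rw [← mul_assoc r a, hright (b * L'.prod) (r * a) hra, hleft r a ha,
              mul_assoc (f a) b, mul_assoc r (f a)]
        rw [Function.iterate_succ_apply, Function.iterate_succ_apply, h3, hfL, IH2 r]

/-- If `R` is a prime `k`-algebra in which every nonzero two-sided
ideal contains a nonzero idempotent `e` with `Z(eRe)` a field, and
`dim_k R < |k|`, then the extended centroid of `R` is algebraic over `k`. -/
theorem extended_centroid_algebraic_of_idempotents
    (k : Type) [Field k] (R : Type) [Ring R] [Algebra k R]
    (hprime : ∀ a b : R, (∀ x : R, a * x * b = 0) → a = 0 ∨ b = 0)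
    (hidem : ∀ I : TwoSidedIdeal R, I ≠ ⊥ →
      ∃ e : R, e ∈ I ∧ e * e = e ∧ CornerCenterIsField e)
    (hdim : Module.rank k R < Cardinal.mk k) :
    ExtCentroidAlgebraic k R := by
  classical
  intro I hI f _hadd _hsmul hleft hright
  obtain ⟨e, heI, hee, heZ⟩ := hidem I hI
  have he0 : e ≠ 0 := heZ.1
  set q := f e with hq
  -- basic corner facts
  have hqe : q * e = q := by
    have h := hright e e heI; rw [hee] at h; rw [hq]; exact h.symm
  have heq : e * q = q := by
    have h := hleft e e heI; rw [hee] at h; rw [hq]; exact h.symm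
  have hqa : ∀ x, x ∈ I → e * f x = q * x := by
    intro x hx
    rw [hq, ← hleft e x hx]
    exact hright x e heI
  have hcorner : ∀ w : R, e * w * e = w → e * w = w ∧ w * e = w := by
    intro w hw
    constructor
    · conv_lhs => rw [← hw]
      rw [← mul_assoc, ← mul_assoc, hee, hw]
    · conv_lhs => rw [← hw]
      rw [mul_assoc, hee, hw]
  have hqZ : ∀ w : R, e * w * e = w → q * w = w * q := by
    intro w hw
    obtain ⟨hew, hwe⟩ := hcorner w hw
    have h1 : q * w = f w := by rw [hq, ← hright w e heI, hew]
    have h2 : w * q = f w := by rw [hq, ← hleft w e heI, hwe]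
    rw [h1, h2]
  have hqnE : ∀ n : ℕ, q ^ n * e = e * q ^ n := by
    intro n
    cases n with
    | zero => simp
    | succ n =>
      rw [pow_succ, mul_assoc, hqe, ← pow_succ, pow_succ', ← mul_assoc, heq, ← pow_succ']
  have hcomm : ∀ p : Polynomial k, Polynomial.aeval q p * e = e * Polynomial.aeval q p := by
    intro p
    induction p using Polynomial.induction_on' with
    | add p₁ p₂ h₁ h₂ => rw [map_add, add_mul, mul_add, h₁, h₂]
    | monomial n a =>
      rw [Polynomial.aeval_monomial, mul_assoc, hqnE n, ← mul_assoc, Algebra.commutes a e,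
          mul_assoc]
  have hAe : ∀ pp : Polynomial k, e * Polynomial.aeval q pp * e = e * Polynomial.aeval q pp := by
    intro pp
    rw [mul_assoc, hcomm pp, ← mul_assoc, hee]
  have hA_mul : ∀ p₁ p₂ : Polynomial k,
      e * Polynomial.aeval q (p₁ * p₂)
        = (e * Polynomial.aeval q p₁) * (e * Polynomial.aeval q p₂) := by
    intro p₁ p₂
    rw [map_mul, ← mul_assoc]
    conv_rhs => rw [← mul_assoc, hAe p₁]
  have hA_C : ∀ a : k, e * Polynomial.aeval q (Polynomial.C a) = a • e := by
    intro a
    rw [Polynomial.aeval_C, ← Algebra.commutes a e, ← Algebra.smul_def]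
  have hA_lin : ∀ c : k,
      e * Polynomial.aeval q (Polynomial.X - Polynomial.C c) = q - c • e := by
    intro c
    rw [map_sub, Polynomial.aeval_X, Polynomial.aeval_C, mul_sub, heq,
        ← Algebra.commutes c e, ← Algebra.smul_def]
  have hz_mem : ∀ c : k, e * (q - c • e) * e = q - c • e := by
    intro c
    simp only [mul_sub, sub_mul, heq, hqe, mul_smul_comm, smul_mul_assoc, hee]
  have hz_cent : ∀ (c : k) (w : R), e * w * e = w → (q - c • e) * w = w * (q - c • e) := by
    intro c w hw
    obtain ⟨hew, hwe⟩ := hcorner w hw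
    rw [sub_mul, mul_sub, hqZ w hw, smul_mul_assoc, mul_smul_comm, hew, hwe]
  -- key algebraicity fact
  have hpoly : ∃ p : Polynomial k, p ≠ 0 ∧ e * Polynomial.aeval q p = 0 := by
    by_contra hnp
    push_neg at hnp
    have hzne : ∀ c : k, q - c • e ≠ 0 := by
      intro c hc
      exact hnp (Polynomial.X - Polynomial.C c) (Polynomial.X_sub_C_ne_zero c)
        (by rw [hA_lin c, hc])
    choose y hy1 hy2 hy3 hy4 using fun c : k =>
      heZ.2 (q - c • e) (hz_mem c) (hz_cent c) (hzne c)
    have hyz : ∀ c c₀ : k, y c * (q - c₀ • e) = e + (c - c₀) • y c := by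
      intro c c₀
      have h5 : q - c₀ • e = (q - c • e) + (c - c₀) • e := by
        rw [sub_smul]; abel
      rw [h5, mul_add, hy4 c, mul_smul_comm, (hcorner (y c) (hy1 c)).2]
    have key : ∀ (t : Finset k) (c₀ : k) (p' : Polynomial k) (l' : k → k),
        e * Polynomial.aeval q p' + (∑ c ∈ t, l' c • y c) = 0 →
        e * Polynomial.aeval q (p' * (Polynomial.X - Polynomial.C c₀)
            + Polynomial.C (∑ c ∈ t, l' c))
          + (∑ c ∈ t, (l' c * (c - c₀)) • y c) = 0 := by
      intro t c₀ p' l' hrel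
      have h0 : (e * Polynomial.aeval q p' + (∑ c ∈ t, l' c • y c)) * (q - c₀ • e) = 0 := by
        rw [hrel, zero_mul]
      rw [add_mul, Finset.sum_mul] at h0
      have h1 : e * Polynomial.aeval q p' * (q - c₀ • e)
          = e * Polynomial.aeval q (p' * (Polynomial.X - Polynomial.C c₀)) := by
        rw [hA_mul p' (Polynomial.X - Polynomial.C c₀), hA_lin c₀]
      rw [h1] at h0
      have h2 : ∀ c ∈ t, (l' c • y c) * (q - c₀ • e)
          = l' c • e + (l' c * (c - c₀)) • y c := by
        intro c _
        rw [smul_mul_assoc, hyz c c₀, smul_add, smul_smul]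
      rw [Finset.sum_congr rfl h2, Finset.sum_add_distrib, ← Finset.sum_smul] at h0
      rw [map_add, mul_add, hA_C (∑ c ∈ t, l' c), add_assoc]
      exact h0
    have PF : ∀ s : Finset k, ∀ (p' : Polynomial k) (l : k → k),
        e * Polynomial.aeval q p' + (∑ c ∈ s, l c • y c) = 0 → ∀ c ∈ s, l c = 0 := by
      intro s
      induction s using Finset.strongInductionOn with
      | _ s ih =>
        intro p' l hrel c₀ hc₀
        by_contra hlc₀
        have hrel₂ := key s c₀ p' l hrel
        have hsum₂ : ∑ c ∈ s, (l c * (c - c₀)) • y c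
            = ∑ c ∈ s.erase c₀, (l c * (c - c₀)) • y c :=
          (Finset.sum_erase s (by simp)).symm
        rw [hsum₂] at hrel₂
        have hl0 := ih (s.erase c₀) (Finset.erase_ssubset hc₀) _ _ hrel₂
        have hl : ∀ c ∈ s, c ≠ c₀ → l c = 0 := by
          intro c hc hne
          have h6 := hl0 c (Finset.mem_erase.mpr ⟨hne, hc⟩)
          exact (mul_eq_zero.mp h6).resolve_right (sub_ne_zero.mpr hne)
        have hsingle : ∑ c ∈ s, l c • y c = l c₀ • y c₀ :=
          Finset.sum_eq_single c₀ (fun b hb hne => by rw [hl b hb hne, zero_smul])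
            (fun h => absurd hc₀ h)
        rw [hsingle] at hrel
        have hrel' : e * Polynomial.aeval q p' + (∑ c ∈ ({c₀} : Finset k), l c • y c) = 0 := by
          rw [Finset.sum_singleton]; exact hrel
        have hrel₃ := key {c₀} c₀ p' l hrel'
        rw [Finset.sum_singleton, Finset.sum_singleton] at hrel₃
        have h8 : (l c₀ * (c₀ - c₀)) • y c₀ = 0 := by simp
        rw [h8, add_zero] at hrel₃
        refine hnp (p' * (Polynomial.X - Polynomial.C c₀) + Polynomial.C (l c₀)) ?_ hrel₃
        intro h9
        have h10 : Polynomial.eval c₀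
            (p' * (Polynomial.X - Polynomial.C c₀) + Polynomial.C (l c₀)) = l c₀ := by
          simp
        rw [h9] at h10
        simp at h10
        exact hlc₀ h10.symm
    have hLI : LinearIndependent k y := by
      rw [linearIndependent_iff']
      intro s g hg i hi
      refine PF s 0 g ?_ i hi
      rw [map_zero, mul_zero, zero_add]
      exact hg
    exact absurd hLI.cardinal_le_rank (not_le.mpr hdim)
  -- use the polynomial to conclude
  obtain ⟨p, hp0, hpA⟩ := hpoly
  have hiter := iter_key (I := I) hleft hright hqe hqa
  have haev : Polynomial.aeval q p
      = ∑ i : Fin (p.natDegree + 2), p.coeff (i : ℕ) • q ^ (i : ℕ) := by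
    rw [Polynomial.aeval_eq_sum_range' (n := p.natDegree + 2) (by omega) q]
    exact (Fin.sum_univ_eq_sum_range (fun i => p.coeff i • q ^ i) (p.natDegree + 2)).symm
  have hstep1 : ∀ x : Fin (p.natDegree + 1) → R, (∀ j, x j ∈ I) →
      e * (∑ i : Fin (p.natDegree + 2),
        p.coeff (i : ℕ) • f^[(i : ℕ)] (List.ofFn x).prod) = 0 := by
    intro x hx
    have hLmem : ∀ a ∈ List.ofFn x, a ∈ I := by
      intro a ha
      rw [List.mem_ofFn] at ha
      obtain ⟨j, rfl⟩ := ha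
      exact hx j
    have hLlen : (List.ofFn x).length = p.natDegree + 1 := by simp
    calc e * (∑ i : Fin (p.natDegree + 2),
            p.coeff (i : ℕ) • f^[(i : ℕ)] (List.ofFn x).prod)
        = ∑ i : Fin (p.natDegree + 2),
            p.coeff (i : ℕ) • (e * f^[(i : ℕ)] (List.ofFn x).prod) := by
          rw [Finset.mul_sum]
          exact Finset.sum_congr rfl fun i _ => (mul_smul_comm _ _ _)
      _ = ∑ i : Fin (p.natDegree + 2),
            p.coeff (i : ℕ) • (q ^ (i : ℕ) * (e * (List.ofFn x).prod)) := by
          refine Finset.sum_congr rfl fun i _ => ?_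
          rw [(hiter (i : ℕ) (List.ofFn x) hLmem
            (by rw [hLlen]; exact Nat.lt_succ_iff.mp i.isLt)).1]
      _ = (∑ i : Fin (p.natDegree + 2), p.coeff (i : ℕ) • q ^ (i : ℕ))
            * (e * (List.ofFn x).prod) := by
          rw [Finset.sum_mul]
          exact Finset.sum_congr rfl fun i _ => (smul_mul_assoc _ _ _).symm
      _ = Polynomial.aeval q p * (e * (List.ofFn x).prod) := by rw [← haev]
      _ = (Polynomial.aeval q p * e) * (List.ofFn x).prod := by rw [mul_assoc]
      _ = (e * Polynomial.aeval q p) * (List.ofFn x).prod := by rw [hcomm p]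
      _ = 0 := by rw [hpA, zero_mul]
  refine ⟨p.natDegree + 1, fun i => p.coeff (i : ℕ), Nat.le_add_left 1 p.natDegree,
      ⟨⟨p.natDegree, by omega⟩, ?_⟩, ?_⟩
  · show p.coeff p.natDegree ≠ 0
    rw [Polynomial.coeff_natDegree]
    exact Polynomial.leadingCoeff_ne_zero.mpr hp0
  · intro x hx
    have hLmem : ∀ a ∈ List.ofFn x, a ∈ I := by
      intro a ha
      rw [List.mem_ofFn] at ha
      obtain ⟨j, rfl⟩ := ha
      exact hx j
    have hLlen : (List.ofFn x).length = p.natDegree + 1 := by simp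
    have hS : ∀ r : R,
        e * (r * (∑ i : Fin (p.natDegree + 2),
          p.coeff (i : ℕ) • f^[(i : ℕ)] (List.ofFn x).prod)) = 0 := by
      intro r
      have hx' : ∀ j, (Fin.cons (r * x 0) (fun i => x i.succ) : Fin (p.natDegree + 1) → R) j ∈ I := by
        intro j
        induction j using Fin.cases with
        | zero => rw [Fin.cons_zero]; exact I.mul_mem_left _ _ (hx 0)
        | succ i => rw [Fin.cons_succ]; exact hx i.succ
      have h0 := hstep1 _ hx'
      have hprod : (List.ofFn (Fin.cons (r * x 0) (fun i => x i.succ)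
          : Fin (p.natDegree + 1) → R)).prod = r * (List.ofFn x).prod := by
        rw [List.ofFn_succ (f := (Fin.cons (r * x 0) (fun i => x i.succ))),
            List.ofFn_succ (f := x), List.prod_cons, List.prod_cons]
        simp only [Fin.cons_zero, Fin.cons_succ]
        rw [mul_assoc]
      rw [hprod] at h0
      have h1 : ∀ i ∈ (Finset.univ : Finset (Fin (p.natDegree + 2))),
          p.coeff (i : ℕ) • f^[(i : ℕ)] (r * (List.ofFn x).prod)
          = p.coeff (i : ℕ) • (r * f^[(i : ℕ)] ((List.ofFn x).prod)) := by
        intro i _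
        rw [(hiter (i : ℕ) (List.ofFn x) hLmem
          (by rw [hLlen]; exact Nat.lt_succ_iff.mp i.isLt)).2 r]
      rw [Finset.sum_congr rfl h1] at h0
      have h2 : ∑ i : Fin (p.natDegree + 2),
            p.coeff (i : ℕ) • (r * f^[(i : ℕ)] ((List.ofFn x).prod))
          = r * ∑ i : Fin (p.natDegree + 2),
            p.coeff (i : ℕ) • f^[(i : ℕ)] ((List.ofFn x).prod) := by
        rw [Finset.mul_sum]
        exact Finset.sum_congr rfl fun i _ => (mul_smul_comm _ _ _).symm
      rw [h2] at h0
      exact h0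
    have hfin := hprime e
      (∑ i : Fin (p.natDegree + 2), p.coeff (i : ℕ) • f^[(i : ℕ)] (List.ofFn x).prod)
      (fun r => by rw [mul_assoc]; exact hS r)
    rcases hfin with h | h
    · exact absurd h he0
    · exact h
end

section
/- Let k be a field and let R be a unital associative prime von Neumann regular k-algebra with dim_k(R) < |k| (as cardinals). Then the extended centroid of R is algebraic over k; concretely: for every nonzero two-sided ideal I of R and every k-linear map f : I → R satisfying f(r x) = r f(x) and f(x r) = f(x) r for all r ∈ R and x ∈ I, there exist n ≥ 1 and scalars c_0, …, c_n ∈ k, not all zero, such that Σ_{i=0}^{n} c_i f^{i}(x_1 x_2 ⋯ x_n) = 0 for all x_1, …, x_n ∈ I, where f^{i} denotes the i-fold iterate of f (well defined on such products since f(x y) = f(x) y ∈ I for x, y ∈ I). -/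
/-- If `R` is a prime von Neumann regular `k`-algebra with
`dim_k R < |k|`, then the extended centroid of `R` is algebraic over `k`. -/
theorem extended_centroid_algebraic_of_prime_regular
    (k : Type) [Field k] (R : Type) [Ring R] [Algebra k R]
    (hprime : ∀ a b : R, (∀ x : R, a * x * b = 0) → a = 0 ∨ b = 0)
    (hreg : ∀ a : R, ∃ x : R, a = a * x * a)
    (hdim : Module.rank k R < Cardinal.mk k) :
    ExtCentroidAlgebraic k R := by
  classical
  intro I hI f hadd hsmul hleft hright
  by_contra hcon
  push_neg at hcon
  -- a nonzero element of `I`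
  obtain ⟨a, haI, ha0⟩ : ∃ a, a ∈ I ∧ a ≠ 0 := by
    by_contra h
    push_neg at h
    refine hI (TwoSidedIdeal.ext fun x => ?_)
    rw [TwoSidedIdeal.mem_bot]
    exact ⟨fun hx => h x hx, fun hx => hx ▸ I.zero_mem⟩
  -- `f` maps `I` into `I` (uses von Neumann regularity)
  have hfI : ∀ x, x ∈ I → f x ∈ I := by
    intro x hx
    obtain ⟨t, ht⟩ := hreg x
    have h1 : f x = x * t * f x := by
      nth_rewrite 1 [ht]
      exact hleft (x * t) x hx
    rw [mul_assoc] at h1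
    rw [h1]
    exact I.mul_mem_right _ _ hx
  have hsmulI : ∀ (c : k) (x : R), x ∈ I → c • x ∈ I := by
    intro c x hx
    rw [Algebra.smul_def]
    exact I.mul_mem_left _ _ hx
  -- the submodule
  set S : Submodule k R := Submodule.restrictScalars k (TwoSidedIdeal.asIdeal I) with hS
  have hmemS : ∀ x : R, x ∈ S ↔ x ∈ I := fun x => by
    rw [hS, Submodule.restrictScalars_mem, TwoSidedIdeal.mem_asIdeal]
  let F : S →ₗ[k] S :=
    { toFun := fun x => ⟨f x, (hmemS _).2 (hfI x ((hmemS _).1 x.2))⟩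
      map_add' := fun x y => Subtype.ext (hadd x ((hmemS _).1 x.2) y ((hmemS _).1 y.2))
      map_smul' := fun c x => Subtype.ext (hsmul c x ((hmemS _).1 x.2)) }
  have hFiter : ∀ (i : ℕ) (z : S), ((F ^ i) z : R) = f^[i] (z : R) := by
    intro i
    induction i with
    | zero => intro z; rfl
    | succ i ih =>
      intro z
      rw [pow_succ, Module.End.mul_apply, ih (F z), Function.iterate_succ_apply]
      rfl
  have haeval : ∀ (P : Polynomial k) (N : ℕ), P.natDegree < N → ∀ z : S,
      ((Polynomial.aeval F P z : S) : R) = ∑ i ∈ Finset.range N, P.coeff i • f^[i] (z : R) := by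
    intro P N hN z
    rw [Polynomial.aeval_eq_sum_range' hN]
    simp only [LinearMap.sum_apply, LinearMap.smul_apply, AddSubmonoidClass.coe_finset_sum,
      SetLike.val_smul]
    exact Finset.sum_congr rfl fun i _ => by rw [hFiter]
  have hiterI : ∀ (i : ℕ) (x : R), x ∈ I → f^[i] x ∈ I := by
    intro i
    induction i with
    | zero => exact fun x hx => hx
    | succ i ih =>
      intro x hx
      rw [Function.iterate_succ_apply']
      exact hfI _ (ih x hx)
  -- key injectivity lemma
  have hinj : ∀ P : Polynomial k, P ≠ 0 → ∀ z : S, Polynomial.aeval F P z = 0 → z = 0 := by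
    intro P hP z hz
    by_contra hz0
    have hzI : (z : R) ∈ I := (hmemS _).1 z.2
    have hzR : (z : R) ≠ 0 := fun h => hz0 (Subtype.ext h)
    set n := max P.natDegree 1 with hn
    have hdeg : P.natDegree < n + 1 := lt_of_le_of_lt (le_max_left _ _) (Nat.lt_succ_self n)
    set g : R → R := fun y => ∑ i ∈ Finset.range (n + 1), P.coeff i • f^[i] y with hg
    have hgleft : ∀ (r x : R), x ∈ I → g (r * x) = r * g x := by
      intro r x hx
      have hkey : ∀ i : ℕ, f^[i] (r * x) = r * f^[i] x := by
        intro i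
        induction i with
        | zero => rfl
        | succ i ih =>
          rw [Function.iterate_succ_apply', ih, Function.iterate_succ_apply',
            hleft r _ (hiterI i x hx)]
      rw [hg]
      simp only [hkey, mul_smul_comm, Finset.mul_sum]
    have hgright : ∀ (r x : R), x ∈ I → g (x * r) = g x * r := by
      intro r x hx
      have hkey : ∀ i : ℕ, f^[i] (x * r) = f^[i] x * r := by
        intro i
        induction i with
        | zero => rfl
        | succ i ih =>
          rw [Function.iterate_succ_apply', ih, Function.iterate_succ_apply',
            hright r _ (hiterI i x hx)]
      rw [hg]
      simp only [hkey, smul_mul_assoc, Finset.sum_mul]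
    have hgz : g (z : R) = 0 := by
      have h1 := haeval P (n + 1) hdeg z
      rw [hz] at h1
      rw [hg]
      exact h1.symm
    have hgall : ∀ x, x ∈ I → g x = 0 := by
      intro x hx
      have hzr : ∀ r : R, (z : R) * r * g x = 0 := by
        intro r
        have h1 : g ((z : R) * r * x) = (z : R) * r * g x := hgleft ((z : R) * r) x hx
        have h2 : g ((z : R) * (r * x)) = 0 := by
          rw [hgright (r * x) (z : R) hzI, hgz, zero_mul]
        rw [← h1, mul_assoc]
        exact h2
      rcases hprime (z : R) (g x) hzr with h | h
      · exact absurd h hzR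
      · exact h
    -- contradiction with hcon
    obtain ⟨x, hxI, hne⟩ := hcon n (fun i : Fin (n + 1) => P.coeff i)
      (le_max_right _ _)
      ⟨⟨P.natDegree, hdeg⟩, Polynomial.leadingCoeff_ne_zero.mpr hP⟩
    apply hne
    have hp : (List.ofFn x).prod ∈ I := by
      have hn1 : 1 ≤ n := hn ▸ le_max_right _ _
      rw [List.ofFn_eq_map]
      exact I.listProd_mem _ _ ⟨⟨0, hn1⟩, List.mem_finRange _, hxI _⟩
    rw [Fin.sum_univ_eq_sum_range (fun i => P.coeff i • f^[i] (List.ofFn x).prod) (n + 1)]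
    exact hgall _ hp
  -- evaluating `aeval F (X - C c)`
  have hG : ∀ (c : k) (z : S), Polynomial.aeval F (Polynomial.X - Polynomial.C c) z
      = F z - c • z := by
    intro c z
    rw [map_sub, LinearMap.sub_apply, Polynomial.aeval_X, Polynomial.aeval_C,
      Module.algebraMap_end_apply]
  -- bijectivity of `F - c`
  have hGbij : ∀ c : k,
      Function.Bijective (Polynomial.aeval F (Polynomial.X - Polynomial.C c)) := by
    intro c
    constructor
    · intro z1 z2 h
      have h0 : Polynomial.aeval F (Polynomial.X - Polynomial.C c) (z1 - z2) = 0 := by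
        rw [map_sub, h, sub_self]
      exact sub_eq_zero.mp (hinj _ (Polynomial.X_sub_C_ne_zero c) _ h0)
    · intro y
      have hyI : (y : R) ∈ I := (hmemS _).1 y.2
      obtain ⟨t, ht⟩ := hreg (y : R)
      set p : R := (y : R) * t with hpdef
      have hpI : p ∈ I := I.mul_mem_right _ _ hyI
      have hpp : p * p = p := by
        rw [hpdef, ← mul_assoc, ← ht]
      have hpy : p * (y : R) = (y : R) := by
        rw [hpdef]; exact ht.symm
      set q : R := f p - c • p with hqdef
      have hqI : q ∈ I := I.sub_mem (hfI p hpI) (hsmulI c p hpI)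
      have hpq : p * q = q := by
        have h1 : f (p * p) = p * f p := hleft p p hpI
        rw [hpp] at h1
        calc p * q = p * f p - p * (c • p) := by rw [hqdef, mul_sub]
          _ = f p - c • (p * p) := by rw [← h1, mul_smul_comm]
          _ = q := by rw [hpp, hqdef]
      have hqp : q * p = q := by
        have h1 : f (p * p) = f p * p := hright p p hpI
        rw [hpp] at h1
        calc q * p = f p * p - (c • p) * p := by rw [hqdef, sub_mul]
          _ = f p - c • (p * p) := by rw [← h1, smul_mul_assoc]
          _ = q := by rw [hpp, hqdef]
      obtain ⟨x₀, hx₀⟩ := hreg q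
      set s : R := p * x₀ * p with hsdef
      have hsI : s ∈ I := I.mul_mem_right _ _ (I.mul_mem_right _ _ hpI)
      have hps : p * s = s := by
        rw [hsdef]
        simp only [← mul_assoc]
        rw [hpp]
      have hsp : s * p = s := by
        rw [hsdef, mul_assoc, hpp]
      have hqsq : q * s * q = q := by
        rw [hsdef]
        simp only [← mul_assoc]
        rw [hqp, mul_assoc, hpq]
        exact hx₀.symm
      -- show p = q * s using injectivity
      have hxI' : p - q * s ∈ I := I.sub_mem hpI (I.mul_mem_right _ _ hqI)
      have hxp : (p - q * s) * p = p - q * s := by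
        rw [sub_mul, hpp, mul_assoc, hsp]
      have hgx : f (p - q * s) - c • (p - q * s) = 0 := by
        have h1 : f ((p - q * s) * p) = (p - q * s) * f p := hleft (p - q * s) p hpI
        rw [hxp] at h1
        calc f (p - q * s) - c • (p - q * s)
            = (p - q * s) * f p - c • ((p - q * s) * p) := by rw [h1, hxp]
          _ = (p - q * s) * (f p - c • p) := by rw [mul_sub, mul_smul_comm]
          _ = p * q - q * s * q := by rw [← hqdef, sub_mul]
          _ = 0 := by rw [hpq, hqsq, sub_self]
      have hpqs : p = q * s := by
        have h0 : Polynomial.aeval F (Polynomial.X - Polynomial.C c)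
            (⟨p - q * s, (hmemS _).2 hxI'⟩ : S) = 0 := by
          rw [hG]
          exact Subtype.ext hgx
        have := hinj _ (Polynomial.X_sub_C_ne_zero c) _ h0
        have h2 : p - q * s = 0 := congrArg Subtype.val this
        exact (sub_eq_zero.mp h2)
      -- the preimage
      have huI : s * (y : R) ∈ I := I.mul_mem_right _ _ hsI
      have hfs : f s - c • s = p := by
        have h2 : f (p * s) - c • (p * s) = (f p - c • p) * s := by
          rw [hright s p hpI, sub_mul, smul_mul_assoc]
        rw [hps] at h2
        rw [h2, ← hqdef, ← hpqs]
      refine ⟨⟨s * (y : R), (hmemS _).2 huI⟩, ?_⟩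
      rw [hG]
      refine Subtype.ext ?_
      show f (s * (y : R)) - c • (s * (y : R)) = (y : R)
      rw [hright (y : R) s hsI, ← smul_mul_assoc]
      calc f s * (y : R) - (c • s) * (y : R) = (f s - c • s) * (y : R) := by rw [sub_mul]
        _ = p * (y : R) := by rw [hfs]
        _ = (y : R) := hpy
    -- end surjectivity
  -- the independent family
  let E : k → (S ≃ₗ[k] S) := fun c =>
    LinearEquiv.ofBijective (Polynomial.aeval F (Polynomial.X - Polynomial.C c)) (hGbij c)
  let aS : S := ⟨a, (hmemS a).2 haI⟩
  have haS : aS ≠ 0 := fun h => ha0 (congrArg Subtype.val h)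
  let w : k → S := fun c => (E c).symm aS
  have hw : ∀ c, Polynomial.aeval F (Polynomial.X - Polynomial.C c) (w c) = aS := by
    intro c
    exact (E c).apply_symm_apply aS
  have hlin : LinearIndependent k w := by
    rw [linearIndependent_iff']
    intro t γ h0 c₀ hc₀
    set Q : k → Polynomial k := fun c => ∏ c' ∈ t.erase c, (Polynomial.X - Polynomial.C c')
      with hQ
    set P : Polynomial k := ∏ c ∈ t, (Polynomial.X - Polynomial.C c) with hP
    have hPQ : ∀ c ∈ t, (Q c) * (Polynomial.X - Polynomial.C c) = P := fun c hc =>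
      Finset.prod_erase_mul t _ hc
    have h1 : ∀ c ∈ t, Polynomial.aeval F P (w c) = Polynomial.aeval F (Q c) aS := by
      intro c hc
      rw [← hPQ c hc, map_mul, Module.End.mul_apply, hw c]
    have h2 : Polynomial.aeval F (∑ c ∈ t, γ c • Q c) aS = 0 := by
      rw [map_sum, LinearMap.sum_apply]
      have h3 : ∀ c ∈ t, (Polynomial.aeval F (γ c • Q c)) aS
          = γ c • (Polynomial.aeval F P) (w c) := by
        intro c hc
        rw [map_smul, LinearMap.smul_apply, h1 c hc]
      rw [Finset.sum_congr rfl h3]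
      have h4 : ∑ c ∈ t, γ c • (Polynomial.aeval F P) (w c)
          = (Polynomial.aeval F P) (∑ c ∈ t, γ c • w c) := by
        rw [map_sum]
        exact Finset.sum_congr rfl fun c _ => (map_smul _ _ _).symm
      rw [h4, h0, map_zero]
    have hT : (∑ c ∈ t, γ c • Q c) = 0 := by
      by_contra hT0
      exact haS (hinj _ hT0 aS h2)
    have h5 := congrArg (Polynomial.eval c₀) hT
    rw [Polynomial.eval_finset_sum] at h5
    simp only [Polynomial.eval_smul, smul_eq_mul] at h5
    have hQ0 : ∀ c ∈ t, c ≠ c₀ → γ c * Polynomial.eval c₀ (Q c) = 0 := by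
      intro c _ hne
      have : Polynomial.eval c₀ (Q c) = 0 := by
        rw [hQ]
        rw [Polynomial.eval_prod]
        refine Finset.prod_eq_zero (Finset.mem_erase.mpr ⟨hne.symm, hc₀⟩) ?_
        simp
      rw [this, mul_zero]
    rw [Finset.sum_eq_single_of_mem c₀ hc₀ (fun c hc hne => hQ0 c hc hne)] at h5
    simp only [Polynomial.map_zero, Polynomial.eval_zero] at h5
    have hQne : Polynomial.eval c₀ (Q c₀) ≠ 0 := by
      rw [hQ, Polynomial.eval_prod]
      refine Finset.prod_ne_zero_iff.mpr fun c' hc' => ?_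
      have : c' ≠ c₀ := (Finset.mem_erase.mp hc').1
      simp only [Polynomial.eval_sub, Polynomial.eval_X, Polynomial.eval_C]
      exact sub_ne_zero.mpr (Ne.symm this)
    rcases mul_eq_zero.mp h5 with h | h
    · exact h
    · exact absurd h hQne
  have hcard : Cardinal.mk k ≤ Module.rank k S := hlin.cardinal_le_rank
  have hrank : Module.rank k S ≤ Module.rank k R := Submodule.rank_le S
  exact absurd hdim (not_lt.mpr (hcard.trans hrank))
end

section
/- Let R be a prime ring and let a, b ∈ R be nonzero elements such that a x b = b x a for every x ∈ R. Then for any finite families x_1, …, x_d, y_1, …, y_d ∈ R, if Σ_{i=1}^{d} x_i a y_i = 0 then Σ_{i=1}^{d} x_i b y_i = 0. (Consequently the rule Σ x_i a y_i ↦ Σ x_i b y_i gives a well-defined (R,R)-bimodule homomorphism from the two-sided ideal generated by a to the two-sided ideal generated by b.) -/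
/-- In a prime ring, if `a, b ≠ 0` satisfy `a x b = b x a` for all
`x`, then `Σ xᵢ a yᵢ = 0` implies `Σ xᵢ b yᵢ = 0`; hence
`Σ xᵢ a yᵢ ↦ Σ xᵢ b yᵢ` is a well-defined bimodule homomorphism `(a) → (b)`. -/
theorem bimodule_map_well_defined_of_symmetric
    (R : Type) [Ring R]
    (hprime : ∀ a b : R, (∀ x : R, a * x * b = 0) → a = 0 ∨ b = 0)
    (a b : R) (ha : a ≠ 0) (hb : b ≠ 0)
    (hsym : ∀ x : R, a * x * b = b * x * a)
    (d : ℕ) (x y : Fin d → R)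
    (hzero : ∑ i, x i * a * y i = 0) :
    ∑ i, x i * b * y i = 0 := by
  have key : ∀ r : R, (∑ i, x i * b * y i) * r * a = 0 := by
    intro r
    have h1 : (∑ i, x i * b * y i) * r * a = ∑ i, x i * a * y i * r * b := by
      rw [Finset.sum_mul, Finset.sum_mul]
      refine Finset.sum_congr rfl fun i _ => ?_
      have := hsym (y i * r)
      calc x i * b * y i * r * a = x i * (b * (y i * r) * a) := by noncomm_ring
        _ = x i * (a * (y i * r) * b) := by rw [← this]
        _ = x i * a * y i * r * b := by noncomm_ring
    rw [h1, ← Finset.sum_mul, ← Finset.sum_mul, hzero, zero_mul, zero_mul]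
  rcases hprime _ _ key with h | h
  · exact h
  · exact absurd h ha
end

section
/- Let R be a prime ring, let e ∈ R be an idempotent (e² = e), and let x ∈ eRe be an element that commutes with every element of eRe (i.e., x lies in the center Z(eRe) of the corner ring). Then for any finite families r_1, …, r_d, s_1, …, s_d ∈ R, if Σ_{i=1}^{d} r_i e s_i = 0 then Σ_{i=1}^{d} r_i x s_i = 0. (Consequently the rule Σ r_i e s_i ↦ Σ r_i x s_i gives a well-defined (R,R)-bimodule endomorphism of the ideal ReR.) -/
/-- In a prime ring, if `e` is an idempotent and `x ∈ Z(eRe)`, then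
`Σ rᵢ e sᵢ = 0` implies `Σ rᵢ x sᵢ = 0`; hence `Σ rᵢ e sᵢ ↦ Σ rᵢ x sᵢ` gives a
well-defined bimodule endomorphism of `ReR`. -/
theorem bimodule_map_well_defined_of_central_corner_element
    (R : Type) [Ring R]
    (hprime : ∀ a b : R, (∀ y : R, a * y * b = 0) → a = 0 ∨ b = 0)
    (e : R) (he : e * e = e)
    (x : R) (hx : e * x * e = x)
    (hcentral : ∀ w : R, e * w * e = w → x * w = w * x)
    (d : ℕ) (r s : Fin d → R)
    (hzero : ∑ i, r i * e * s i = 0) :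
    ∑ i, r i * x * s i = 0 := by
  have hxe : x * e = x := by
    conv_lhs => rw [← hx]
    rw [mul_assoc, mul_assoc, he, ← mul_assoc, hx]
  have hex : e * x = x := by
    conv_lhs => rw [← hx]
    rw [← mul_assoc, ← mul_assoc, he, hx]
  have hxmul : ∀ t : R, x * (e * t) = x * t := fun t => by
    rw [← mul_assoc, hxe]
  have hee : ∀ t : R, e * (e * t * e) * e = e * t * e := fun t => by
    simp only [mul_assoc]
    rw [he, ← mul_assoc, he]
  have key : ∀ u : R, (∑ i, r i * x * s i) * u * e = 0 := by
    intro u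
    have hterm : ∀ i, r i * x * s i * u * e = (r i * e * s i) * (u * (e * x)) := by
      intro i
      have hc := hcentral _ (hee (s i * u))
      simp only [mul_assoc] at hc ⊢
      rw [← hxmul, hc]
    calc (∑ i, r i * x * s i) * u * e
        = ∑ i, r i * x * s i * u * e := by rw [Finset.sum_mul, Finset.sum_mul]
      _ = ∑ i, (r i * e * s i) * (u * (e * x)) := Finset.sum_congr rfl fun i _ => hterm i
      _ = (∑ i, r i * e * s i) * (u * (e * x)) := by rw [Finset.sum_mul]
      _ = 0 := by rw [hzero, zero_mul]
  have key2 : ∀ y : R, (∑ i, r i * x * s i) * y * x = 0 := by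
    intro y
    calc (∑ i, r i * x * s i) * y * x
        = (∑ i, r i * x * s i) * y * (e * x) := by rw [hex]
      _ = ((∑ i, r i * x * s i) * y * e) * x := by simp only [mul_assoc]
      _ = 0 := by rw [key, zero_mul]
  rcases hprime _ _ key2 with h | h
  · exact h
  · simp [h]
end

section
/- Let R be a unital prime von Neumann regular ring and let e ∈ R be a nonzero idempotent. Then Z(eRe), the center of the corner ring eRe, is a field: e is its identity element and every nonzero element of Z(eRe) has a multiplicative inverse lying in Z(eRe). -/
/-- In a unital prime von Neumann regular ring, the center of the
corner ring `eRe` of any nonzero idempotent `e` is a field: `e` is its identity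
and every nonzero central element of `eRe` has an inverse in `Z(eRe)`. -/
theorem corner_center_is_field_of_prime_regular
    (R : Type) [Ring R]
    (hprime : ∀ a b : R, (∀ x : R, a * x * b = 0) → a = 0 ∨ b = 0)
    (hreg : ∀ a : R, ∃ x : R, a = a * x * a)
    (e : R) (he : e * e = e) (hne : e ≠ 0) :
    (∀ z : R, e * z * e = z → e * z = z ∧ z * e = z) ∧
    (∀ z : R, e * z * e = z → (∀ w : R, e * w * e = w → z * w = w * z) → z ≠ 0 →
      ∃ y : R, e * y * e = y ∧ (∀ w : R, e * w * e = w → y * w = w * y) ∧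
        z * y = e ∧ y * z = e) := by
  have key : ∀ z : R, e * z * e = z → e * z = z ∧ z * e = z := by
    intro z hz
    constructor
    · calc e * z = e * (e * z * e) := by rw [hz]
        _ = (e * e) * z * e := by noncomm_ring
        _ = e * z * e := by rw [he]
        _ = z := hz
    · calc z * e = (e * z * e) * e := by rw [hz]
        _ = e * z * (e * e) := by noncomm_ring
        _ = e * z * e := by rw [he]
        _ = z := hz
  refine ⟨key, ?_⟩
  intro z hz hcomm hz0
  obtain ⟨ez, ze⟩ := key z hz
  obtain ⟨x, hx⟩ := hreg z
  set y := e * x * e with hy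
  have hye : e * y * e = y := by
    calc e * (e * x * e) * e = (e * e) * x * (e * e) := by noncomm_ring
      _ = e * x * e := by rw [he]
  have hzyz : z * y * z = z := by
    calc z * (e * x * e) * z = (z * e) * x * (e * z) := by noncomm_ring
      _ = z * x * z := by rw [ze, ez]
      _ = z := hx.symm
  have hzy : z * y = e := by
    have h0 : ∀ r : R, (e - z * y) * r * z = 0 := by
      intro r
      have hw : e * (e * r * e) * e = e * r * e := by
        calc e * (e * r * e) * e = (e * e) * r * (e * e) := by noncomm_ring
          _ = e * r * e := by rw [he]
      have hcw := hcomm _ hw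
      -- (e - z*y) * r * z = (e - z*y) * (e*r*e) * z
      have step1 : (e - z * y) * r * z = (e - z * y) * (e * r * e) * z := by
        have hye' : y * e = y := (key y hye).2
        have h1 : (e - z * y) * e = e - z * y := by
          rw [sub_mul, he, mul_assoc, hye']
        calc (e - z * y) * r * z
            = ((e - z * y) * e) * r * (e * z) := by rw [h1, ez]
          _ = (e - z * y) * (e * r * e) * z := by noncomm_ring
      rw [step1]
      have expand : (e - z * y) * (e * r * e) * z
          = (e * r * e) * z - z * (y * (e * r * e)) * z := by
        have h1 : e * (e * r * e) = e * r * e := (key _ hw).1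
        calc (e - z * y) * (e * r * e) * z
            = (e * (e * r * e)) * z - z * (y * (e * r * e)) * z := by noncomm_ring
          _ = (e * r * e) * z - z * (y * (e * r * e)) * z := by rw [h1]
      rw [expand]
      have hywe : e * (y * (e * r * e)) * e = y * (e * r * e) := by
        have h1 : e * y = y := (key y hye).1
        have h2 : (e * r * e) * e = e * r * e := (key _ hw).2
        calc e * (y * (e * r * e)) * e = (e * y) * ((e * r * e) * e) := by noncomm_ring
          _ = y * (e * r * e) := by rw [h1, h2]
      have := hcomm _ hywe
      -- z * (y * w) * z = (y*w) * z * z? no: use z*(y*w) = (y*w)*z? better: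
      -- z * y * w * z = z * y * (z * w) = (z*y*z)*w = z*w,  and w*z = z*w
      calc (e * r * e) * z - z * (y * (e * r * e)) * z
          = z * (e * r * e) - z * (y * ((e * r * e) * z)) := by rw [hcw]; noncomm_ring
        _ = z * (e * r * e) - z * (y * (z * (e * r * e))) := by rw [hcw]
        _ = z * (e * r * e) - (z * y * z) * (e * r * e) := by noncomm_ring
        _ = 0 := by rw [hzyz]; noncomm_ring
    rcases hprime _ _ h0 with h | h
    · exact (sub_eq_zero.mp h).symm
    · exact absurd h hz0
  have hyz : y * z = e := by rw [← hcomm y hye]; exact hzy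
  refine ⟨y, hye, ?_, hzy, hyz⟩
  intro w hw
  have hwz := hcomm w hw
  have hew := (key w hw).1
  have hwe := (key w hw).2
  calc y * w = y * (w * e) := by rw [hwe]
    _ = y * (w * (z * y)) := by rw [hzy]
    _ = y * ((w * z) * y) := by noncomm_ring
    _ = y * ((z * w) * y) := by rw [hwz]
    _ = (y * z) * (w * y) := by noncomm_ring
    _ = e * (w * y) := by rw [hyz]
    _ = (e * w) * y := by noncomm_ring
    _ = w * y := by rw [hew]
end

section
/- Let k be a field and let R be a unital associative prime k-algebra whose extended centroid is algebraic over k, in the following concrete sense: for every nonzero two-sided ideal I of R and every k-linear map f : I → R satisfying f(r x) = r f(x) and f(x r) = f(x) r for all r ∈ R and x ∈ I, there exist n ≥ 1 and scalars c_0, …, c_n ∈ k, not all zero, such that Σ_{i=0}^{n} c_i f^{i}(x_1 x_2 ⋯ x_n) = 0 for all x_1, …, x_n ∈ I (where f^{i} is the i-fold iterate of f, well defined on such products since f(x y) = f(x) y ∈ I for x, y ∈ I). Then for every nonzero idempotent e of R, the center Z(eRe) of the corner ring eRe is a field: e is its identity and every nonzero element of Z(eRe) has a multiplicative inverse lying in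 Z(eRe). -/
private lemma corner_lr {R : Type} [Ring R] (e : R) (he : e * e = e)
    (w : R) (hw : e * w * e = w) : e * w = w ∧ w * e = w := by
  constructor
  · rw [← hw]; simp only [← mul_assoc, he]
  · rw [← hw]; simp only [mul_assoc, he]

private lemma pow_idem_aux {R : Type} [Ring R] (e : R) (he : e * e = e) :
    ∀ n : ℕ, 1 ≤ n → e ^ n = e := by
  intro n hn
  induction n with
  | zero => omega
  | succ m ih =>
    rcases Nat.eq_or_lt_of_le hn with h | h
    · rw [← h, pow_one]
    · have hm : 1 ≤ m := by omega
      rw [pow_succ, ih hm, he]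

private lemma hzie_aux {R : Type} [Ring R] (e z : R) (he : e * e = e) (hze : z * e = z) :
    ∀ i, e * z ^ i * e = e * z ^ i := by
  intro i
  induction i with
  | zero => simp [he]
  | succ j hj =>
    rw [pow_succ, ← mul_assoc e (z ^ j) z, mul_assoc (e * z ^ j) z e, hze]

private lemma key_lemma (k : Type) [Field k] (R : Type) [Ring R] [Algebra k R]
    (e z : R) (he : e * e = e) (hez : e * z = z) (hze : z * e = z)
    (hcomm : ∀ w : R, e * w * e = w → z * w = w * z)
    (hcancel : ∀ v : R, e * v * e = v → z * v = 0 → v = 0) :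
    ∀ (N : ℕ) (d : ℕ → k), (∃ i, i < N ∧ d i ≠ 0) →
      (∑ i ∈ Finset.range N, d i • (e * z ^ i)) = 0 →
      ∃ y : R, e * y * e = y ∧ (∀ w : R, e * w * e = w → y * w = w * y) ∧ z * y = e := by
  have hzie : ∀ i, e * z ^ i * e = e * z ^ i := hzie_aux e z he hze
  have hmem : ∀ i, e * (e * z ^ i) * e = e * z ^ i := by
    intro i
    rw [← mul_assoc e e (z ^ i), he, hzie i]
  have hpowcomm : ∀ (i : ℕ) (w : R), e * w * e = w → (e * z ^ i) * w = w * (e * z ^ i) := by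
    intro i
    induction i with
    | zero =>
      intro w hw
      simp only [pow_zero, mul_one]
      rw [(corner_lr e he w hw).1, (corner_lr e he w hw).2]
    | succ j ihj =>
      intro w hw
      have h1 : e * z ^ (j + 1) = (e * z ^ j) * z := by rw [pow_succ, mul_assoc]
      rw [h1, mul_assoc, hcomm w hw, ← mul_assoc, ihj w hw, mul_assoc]
  have hzpow : ∀ i, z * (e * z ^ i) = e * z ^ (i + 1) := by
    intro i
    rw [pow_succ']
    rw [← mul_assoc z e (z ^ i), hze, ← mul_assoc e z (z ^ i), hez]
  intro N
  induction N with
  | zero =>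
    rintro d ⟨i, hi, _⟩ _
    omega
  | succ m ih =>
    intro d hex hsum
    set W : R := ∑ i ∈ Finset.range m, d (i + 1) • (e * z ^ i) with hW
    have hWmem : e * W * e = W := by
      rw [hW, Finset.mul_sum, Finset.sum_mul]
      exact Finset.sum_congr rfl fun i _ => by
        rw [mul_smul_comm, smul_mul_assoc, hmem i]
    have hWcomm : ∀ w : R, e * w * e = w → W * w = w * W := by
      intro w hw
      rw [hW, Finset.sum_mul, Finset.mul_sum]
      exact Finset.sum_congr rfl fun i _ => by
        rw [smul_mul_assoc, mul_smul_comm, hpowcomm i w hw]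
    have hzW : z * W = ∑ i ∈ Finset.range m, d (i + 1) • (e * z ^ (i + 1)) := by
      rw [hW, Finset.mul_sum]
      exact Finset.sum_congr rfl fun i _ => by rw [mul_smul_comm, hzpow i]
    have hsum' : d 0 • e + z * W = 0 := by
      rw [hzW]
      rw [Finset.sum_range_succ'] at hsum
      simpa [add_comm] using hsum
    by_cases h0 : d 0 = 0
    · have hzW0 : z * W = 0 := by
        rw [h0] at hsum'
        simpa using hsum'
      have hW0 : W = 0 := hcancel W hWmem hzW0
      apply ih (fun i => d (i + 1))
      · obtain ⟨i, hi, hdi⟩ := hex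
        match i with
        | 0 => exact absurd h0 hdi
        | j + 1 => exact ⟨j, by omega, hdi⟩
      · rw [← hW]; exact hW0
    · refine ⟨(-(d 0)⁻¹) • W, ?_, ?_, ?_⟩
      · rw [mul_smul_comm, smul_mul_assoc, hWmem]
      · intro w hw
        rw [smul_mul_assoc, mul_smul_comm, hWcomm w hw]
      · rw [mul_smul_comm]
        have hneg : z * W = -(d 0 • e) := eq_neg_of_add_eq_zero_right hsum'
        rw [hneg, smul_neg, neg_smul, neg_neg, smul_smul, inv_mul_cancel₀ h0, one_smul]

/-- If the extended centroid of a prime `k`-algebra `R` is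
algebraic over `k`, then for every nonzero idempotent `e` of `R`, the center
`Z(eRe)` of the corner ring is a field: `e` is its identity and every nonzero
element of `Z(eRe)` has an inverse lying in `Z(eRe)`. -/
theorem corner_center_field_of_extended_centroid_algebraic
    (k : Type) [Field k] (R : Type) [Ring R] [Algebra k R]
    (hprime : ∀ a b : R, (∀ x : R, a * x * b = 0) → a = 0 ∨ b = 0)
    (halg : ExtCentroidAlgebraic k R)
    (e : R) (he : e * e = e) (hne : e ≠ 0) :
    (∀ z : R, e * z * e = z → e * z = z ∧ z * e = z) ∧
    (∀ z : R, e * z * e = z → (∀ w : R, e * w * e = w → z * w = w * z) → z ≠ 0 →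
      ∃ y : R, e * y * e = y ∧ (∀ w : R, e * w * e = w → y * w = w * y) ∧
        z * y = e ∧ y * z = e) := by
  classical
  constructor
  · exact fun z hz => corner_lr e he z hz
  · intro z hz hzc hznz
    obtain ⟨hez, hze⟩ := corner_lr e he z hz
    -- key relation : z * x * e = e * x * z
    have hrel : ∀ x : R, z * x * e = e * x * z := by
      intro x
      have hx : e * (e * x * e) * e = e * x * e := by
        rw [show e * (e * x * e) * e = (e * e) * x * (e * e) from by noncomm_ring, he]
      have h := hzc (e * x * e) hx
      calc z * x * e = z * (e * x * e) := by
            rw [show z * (e * x * e) = (z * e) * x * e from by noncomm_ring, hze]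
        _ = (e * x * e) * z := h
        _ = e * x * z := by
            rw [show (e * x * e) * z = e * x * (e * z) from by noncomm_ring, hez]
    have hrel2 : ∀ a t : R, a * z * t * e = a * e * t * z := by
      intro a t
      rw [show a * z * t * e = a * (z * t * e) from by noncomm_ring, hrel t,
        show a * (e * t * z) = a * e * t * z from by noncomm_ring]
    have hcancel : ∀ v : R, e * v * e = v → z * v = 0 → v = 0 := by
      intro v hv hzv
      have hev : e * v = v := (corner_lr e he v hv).1
      have hall : ∀ x : R, z * x * v = 0 := by
        intro x
        calc z * x * v = z * x * (e * v) := by rw [hev]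
          _ = (e * x * z) * v := by
              rw [show z * x * (e * v) = (z * x * e) * v from by noncomm_ring, hrel x]
          _ = e * x * (z * v) := by noncomm_ring
          _ = 0 := by rw [hzv, mul_zero]
      rcases hprime z v hall with h | h
      · exact absurd h hznz
      · exact h
    have hzie : ∀ i, e * z ^ i * e = e * z ^ i := hzie_aux e z he hze
    -- the two-sided ideal I
    set I : TwoSidedIdeal R := TwoSidedIdeal.mk'
      {u : R | ∃ v : R, ∀ x : R, v * x * e = u * x * z}
      ⟨0, fun x => by simp⟩
      (fun {a b} ⟨va, hva⟩ ⟨vb, hvb⟩ => ⟨va + vb, fun x => by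
        simp only [add_mul]
        rw [hva x, hvb x]⟩)
      (fun {a} ⟨va, hva⟩ => ⟨-va, fun x => by
        simp only [neg_mul]
        rw [hva x]⟩)
      (fun {r u} ⟨v, hv⟩ => ⟨r * v, fun x => by
        have h := hv x
        simp only [mul_assoc] at h ⊢
        rw [h]⟩)
      (fun {u r} ⟨v, hv⟩ => ⟨v * r, fun x => by
        have h := hv (r * x)
        simp only [mul_assoc] at h ⊢
        rw [h]⟩)
      with hI
    have hmemI : ∀ u : R, u ∈ I ↔ ∃ v : R, ∀ x : R, v * x * e = u * x * z := by
      intro u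
      rw [hI]
      exact TwoSidedIdeal.mem_mk' _ _ _ _ _ _ u
    have heI : e ∈ I := (hmemI e).2 ⟨z, fun x => hrel x⟩
    have hIbot : I ≠ ⊥ := by
      intro h
      rw [h, TwoSidedIdeal.mem_bot] at heI
      exact hne heI
    -- the partial bimodule map f
    set f : R → R := fun u =>
      if h : ∃ v : R, ∀ x : R, v * x * e = u * x * z then h.choose else 0 with hfdef
    have huniq : ∀ u v v' : R, (∀ x, v * x * e = u * x * z) →
        (∀ x, v' * x * e = u * x * z) → v = v' := by
      intro u v v' h1 h2
      have h3 : ∀ x, (v - v') * x * e = 0 := by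
        intro x
        rw [sub_mul, sub_mul, h1 x, h2 x, sub_self]
      rcases hprime (v - v') e h3 with h | h
      · exact sub_eq_zero.mp h
      · exact absurd h hne
    have hfspec : ∀ u v : R, (∀ x, v * x * e = u * x * z) → f u = v := by
      intro u v hv
      have hex : ∃ w : R, ∀ x : R, w * x * e = u * x * z := ⟨v, hv⟩
      have h1 : f u = hex.choose := by
        simp only [hfdef]
        exact dif_pos hex
      exact h1.trans (huniq u _ v hex.choose_spec hv)
    have hfprop : ∀ u, u ∈ I → ∀ t, f u * t * e = u * t * z := by
      intro u hu
      obtain ⟨v, hv⟩ := (hmemI u).1 hu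
      rw [hfspec u v hv]
      exact hv
    obtain ⟨n, c, hn1, ⟨i0, hi0⟩, hsum⟩ := halg I hIbot f
      (fun x hx y hy => hfspec (x + y) (f x + f y) (fun t => by
        simp only [add_mul]
        rw [hfprop x hx t, hfprop y hy t]))
      (fun cc x hx => hfspec (cc • x) (cc • f x) (fun t => by
        simp only [smul_mul_assoc]
        rw [hfprop x hx t]))
      (fun r x hx => hfspec (r * x) (r * f x) (fun t => by
        rw [mul_assoc r (f x) t, mul_assoc r (f x * t) e, hfprop x hx t,
          mul_assoc r x t, mul_assoc r (x * t) z]))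
      (fun r x hx => hfspec (x * r) (f x * r) (fun t => by
        rw [mul_assoc (f x) r t, hfprop x hx (r * t), mul_assoc x r t]))
    -- iterates of f on e
    have hiter : ∀ i : ℕ, f^[i] e = e * z ^ i := by
      intro i
      induction i with
      | zero => simp
      | succ j hj =>
        rw [Function.iterate_succ_apply', hj]
        exact hfspec (e * z ^ j) (e * z ^ (j + 1)) (fun t => by
          rw [show e * z ^ (j + 1) = e * z ^ j * z from by rw [pow_succ, mul_assoc],
            hrel2 (e * z ^ j) t, hzie j])
    have hprodeq : (List.ofFn fun _ : Fin n => e).prod = e := by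
      rw [List.ofFn_const, List.prod_replicate]
      exact pow_idem_aux e he n hn1
    have hprod := hsum (fun _ => e) (fun j => heI)
    rw [hprodeq] at hprod
    simp only [hiter] at hprod
    -- convert to a range sum
    set d : ℕ → k := fun i => if h : i < n + 1 then c ⟨i, h⟩ else 0 with hddef
    have hdc : ∀ i : Fin (n + 1), d ↑i = c i := by
      intro i
      simp only [hddef]
      rw [dif_pos i.isLt]
    have hd : ∑ i ∈ Finset.range (n + 1), d i • (e * z ^ i) = 0 := by
      rw [← Fin.sum_univ_eq_sum_range (fun i => d i • (e * z ^ i)) (n + 1)]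
      calc ∑ i : Fin (n + 1), d ↑i • (e * z ^ (i : ℕ))
          = ∑ i : Fin (n + 1), c i • (e * z ^ (i : ℕ)) :=
            Finset.sum_congr rfl fun i _ => by rw [hdc i]
        _ = 0 := hprod
    have hex : ∃ i, i < n + 1 ∧ d i ≠ 0 := ⟨↑i0, i0.isLt, by rw [hdc i0]; exact hi0⟩
    obtain ⟨y, hy1, hy2, hy3⟩ := key_lemma k R e z he hez hze hzc hcancel (n + 1) d hex hd
    exact ⟨y, hy1, hy2, hy3, by rw [hy2 z hz, hy3]⟩
end

section
/- Let k be an uncountable field and let R be a unital associative prime k-algebra with dim_k(R) ≤ ℵ₀ such that every nonzero two-sided ideal of R contains a nonzero idempotent. Then the following are equivalent: (i) the extended centroid of R is algebraic over k, in the concrete sense that for every nonzero two-sided ideal I of R and every k-linear map f : I → R satisfying f(r x) = r f(x) and f(x r) = f(x) r for all r ∈ R, x ∈ I, there exist n ≥ 1 and scalars c_0, …, c_n ∈ k, not all zero, with Σ_{i=0}^{n} c_i f^{i}(x_1 ⋯ x_n) = 0 for all x_1, …, x_n ∈ I; (iii) for each nonzero idempotent e of R, Z(eRe) is a field; (iv)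 each nonzero two-sided ideal of R contains a nonzero idempotent e such that Z(eRe) is a field. -/
/-!
An element `z` of `Z(eRe)`, for a nonzero idempotent `e`, is the value at `e` of the
`(R,R)`-bimodule map `ReR → R`, `∑ aᵢ e bᵢ ↦ ∑ aᵢ z bᵢ`, which is well defined because `R` is
prime; conversely a bimodule map `f` on an ideal containing `e` has `f e ∈ Z(eRe)`. Primeness also
makes `Z(eRe)` a domain, so `z` is invertible there as soon as it is algebraic over `k`. If
`Z(eRe)` is a field and `z` is transcendental, the inverses of `z - λe`, `λ ∈ k`, are linearly
independent over `k`, which is impossible when `k` is uncountable and `dim_k R ≤ ℵ₀`. Finally, if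
`p(f e) e = 0` then `f^i(w) x e = w x (f e)^i e` for a product `w` of `n ≥ deg p` elements of the
ideal, so `(∑ cᵢ f^i(w)) R e = 0` and primeness gives `∑ cᵢ f^i(w) = 0`.
-/

open Polynomial Cardinal

def IsPrimeRing (R : Type*) [Ring R] : Prop :=
  ∀ a b : R, (∀ x : R, a * x * b = 0) → a = 0 ∨ b = 0

section CornerCenter

variable {R : Type*} [Ring R] {e z : R}

def cornerCenter (e : R) : Set R :=
  {z | e * z * e = z ∧ ∀ w : R, e * w * e = w → z * w = w * z}

theorem IsIdempotentElem.mul_eq_of_mul_mul_eq (he : IsIdempotentElem e) (hz : e * z * e = z) :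
    e * z = z := by
  rw [← hz, ← mul_assoc, ← mul_assoc, he.eq]

theorem IsIdempotentElem.mul_eq_of_mul_mul_eq' (he : IsIdempotentElem e) (hz : e * z * e = z) :
    z * e = z := by
  rw [← hz, mul_assoc, he.eq]

theorem mul_mul_eq_of_mem_cornerCenter (he : IsIdempotentElem e) (hz : z ∈ cornerCenter e)
    (x : R) {u : R} (hu : e * u = u) : z * x * u = e * x * e * (z * u) := by
  have hexe : e * (e * x * e) * e = e * x * e := by
    simp only [← mul_assoc, he.eq]; simp only [mul_assoc, he.eq]
  calc z * x * u = z * e * x * (e * u) := by rw [he.mul_eq_of_mul_mul_eq' hz.1, hu]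
    _ = z * (e * x * e) * u := by simp only [mul_assoc]
    _ = e * x * e * z * u := by rw [hz.2 _ hexe]
    _ = e * x * e * (z * u) := mul_assoc _ _ _

theorem eq_zero_of_mul_eq_zero_of_mem_cornerCenter (hprime : IsPrimeRing R)
    (he : IsIdempotentElem e) (hz : z ∈ cornerCenter e) (hz0 : z ≠ 0) {u : R} (hu : e * u = u)
    (h : z * u = 0) : u = 0 :=
  (hprime z u fun x => by
    rw [mul_mul_eq_of_mem_cornerCenter he hz x hu, h, mul_zero]).resolve_left hz0

theorem eq_zero_of_pow_mul_eq_zero_of_mem_cornerCenter (hprime : IsPrimeRing R)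
    (he : IsIdempotentElem e) (hz : z ∈ cornerCenter e) (hz0 : z ≠ 0) (n : ℕ) {u : R}
    (hu : e * u = u) (h : z ^ n * u = 0) : u = 0 := by
  induction n generalizing u with
  | zero => rwa [pow_zero, one_mul] at h
  | succ n ih =>
    have hzu : e * (z * u) = z * u := by rw [← mul_assoc, he.mul_eq_of_mul_mul_eq hz.1]
    rw [pow_succ, mul_assoc] at h
    exact eq_zero_of_mul_eq_zero_of_mem_cornerCenter hprime he hz hz0 hu (ih hzu h)

variable {k : Type*} [CommSemiring k] [Algebra k R]

theorem aeval_mul_mem_cornerCenter (he : IsIdempotentElem e) (hz : z ∈ cornerCenter e)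
    (q : k[X]) : aeval z q * e ∈ cornerCenter e := by
  have hcomm : ∀ w, Commute w z → Commute w (aeval z q) := fun w =>
    Algebra.commute_of_mem_adjoin_singleton_of_commute (aeval_mem_adjoin_singleton k z)
  have hez : Commute e z := by
    rw [Commute, SemiconjBy, he.mul_eq_of_mul_mul_eq hz.1, he.mul_eq_of_mul_mul_eq' hz.1]
  refine ⟨?_, fun w hw => ?_⟩
  · rw [← mul_assoc, (hcomm e hez).eq]
    simp only [mul_assoc, he.eq]
  · rw [mul_assoc, he.mul_eq_of_mul_mul_eq hw, ← mul_assoc, (hcomm w (hz.2 w hw).symm).eq,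
      mul_assoc, he.mul_eq_of_mul_mul_eq' hw]

/-- `aeval z p * e` is `p(z)` computed in the corner ring `eRe`, whose identity is `e`. -/
def IsCornerAlgebraic (k : Type*) [CommSemiring k] [Algebra k R] (e z : R) : Prop :=
  ∃ p : k[X], p ≠ 0 ∧ aeval z p * e = 0

theorem aeval_mul_eq_sum_fin {p : k[X]} {n : ℕ} (hp : p.natDegree ≤ n) (z e : R) :
    aeval z p * e = ∑ i : Fin (n + 1), p.coeff i • (z ^ (i : ℕ) * e) := by
  rw [aeval_eq_sum_range' (Nat.lt_succ_of_le hp), Finset.sum_mul,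
    ← Fin.sum_univ_eq_sum_range (fun i => p.coeff i • z ^ i * e)]
  simp only [smul_mul_assoc]

end CornerCenter

section BimoduleMap

variable {R : Type*} [Ring R] {I : TwoSidedIdeal R} {f : R → R} {e : R}

theorem iterate_list_prod_mul_mem (hL : ∀ r x, x ∈ I → f (r * x) = r * f x) (i : ℕ) {l : List R}
    (hl : ∀ a ∈ l, a ∈ I) (hi : i < l.length) (r : R) : f^[i] (l.prod * r) ∈ I := by
  induction i generalizing l r with
  | zero =>
    obtain ⟨a, t, rfl⟩ := List.exists_cons_of_length_pos hi
    rw [Function.iterate_zero_apply, List.prod_cons, mul_assoc]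
    exact I.mul_mem_right _ _ (hl a List.mem_cons_self)
  | succ i ih =>
    rcases l.eq_nil_or_concat' with rfl | ⟨t, a, rfl⟩
    · simp at hi
    have ha : a ∈ I := hl a (List.mem_append_right _ List.mem_cons_self)
    rw [Function.iterate_succ_apply, List.prod_append, List.prod_singleton, mul_assoc,
      hL _ _ (I.mul_mem_right _ _ ha)]
    exact ih (fun b hb => hl b (List.mem_append_left _ hb)) (by simpa using hi) _

theorem apply_mem_cornerCenter (hL : ∀ r x, x ∈ I → f (r * x) = r * f x)
    (hR : ∀ r x, x ∈ I → f (x * r) = f x * r) (heI : e ∈ I) (he : IsIdempotentElem e) :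
    f e ∈ cornerCenter e := by
  refine ⟨by rw [← hL _ _ heI, he.eq, ← hR _ _ heI, he.eq], fun w hw => ?_⟩
  rw [← hR _ _ heI, ← hL _ _ heI, he.mul_eq_of_mul_mul_eq hw, he.mul_eq_of_mul_mul_eq' hw]

theorem iterate_mul_mul_eq (hL : ∀ r x, x ∈ I → f (r * x) = r * f x)
    (hR : ∀ r x, x ∈ I → f (x * r) = f x * r) (heI : e ∈ I) (he : IsIdempotentElem e) {y : R}
    (i : ℕ) (hy : ∀ j < i, f^[j] y ∈ I) (x : R) : f^[i] y * (x * e) = y * (x * f e ^ i * e) := by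
  induction i generalizing x with
  | zero => rw [Function.iterate_zero_apply, pow_zero, mul_one]
  | succ i ih =>
    have hfe : f e * e = f e := he.mul_eq_of_mul_mul_eq' (apply_mem_cornerCenter hL hR heI he).1
    rw [Function.iterate_succ_apply', ← hR _ _ (hy i i.lt_succ_self),
      hL _ _ (I.mul_mem_left _ _ heI), hL _ _ heI]
    conv_lhs => rw [← hfe, ← mul_assoc x, ih (fun j hj => hy j (by omega))]
    simp only [pow_succ', mul_assoc]

theorem iterate_eq_pow_mul (hL : ∀ r x, x ∈ I → f (r * x) = r * f x)
    (hR : ∀ r x, x ∈ I → f (x * r) = f x * r) (heI : e ∈ I) (he : IsIdempotentElem e) (j : ℕ) :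
    f^[j] e = f e ^ j * e := by
  induction j with
  | zero => rw [Function.iterate_zero_apply, pow_zero, one_mul]
  | succ j ih =>
    rw [Function.iterate_succ_apply', ih, hL _ _ heI, pow_succ, mul_assoc,
      he.mul_eq_of_mul_mul_eq' (apply_mem_cornerCenter hL hR heI he).1]

end BimoduleMap

theorem Polynomial.eq_zero_of_sum_C_mul_prod_erase_eq_zero {K : Type*} [CommRing K] [IsDomain K]
    [DecidableEq K] {s : Finset K} {g : K → K}
    (h : ∑ b ∈ s, C (g b) * ∏ μ ∈ s.erase b, (X - C μ) = 0) {a : K} (ha : a ∈ s) :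
    g a = 0 := by
  have heval := congrArg (eval a) h
  simp only [eval_finsetSum, eval_mul, eval_C, eval_prod, eval_sub, eval_X, eval_zero] at heval
  rw [Finset.sum_eq_single_of_mem a ha fun b _ hba => by
    rw [Finset.prod_eq_zero (Finset.mem_erase.mpr ⟨Ne.symm hba, ha⟩) (sub_self a), mul_zero]]
    at heval
  refine (mul_eq_zero.mp heval).resolve_right ?_
  exact Finset.prod_ne_zero_iff.mpr fun μ hμ => sub_ne_zero.mpr (Finset.ne_of_mem_erase hμ).symm

section Algebraic

variable {R : Type*} [Ring R] {k : Type*} [Field k] [Algebra k R] {e z : R}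

theorem exists_inv_mem_cornerCenter_of_isCornerAlgebraic (hprime : IsPrimeRing R)
    (he : IsIdempotentElem e) (hz : z ∈ cornerCenter e) (hz0 : z ≠ 0)
    (halg : IsCornerAlgebraic k e z) : ∃ y ∈ cornerCenter e, z * y = e ∧ y * z = e := by
  obtain ⟨p, hp0, hpz⟩ := halg
  obtain ⟨q, hpq, hq⟩ := exists_eq_pow_rootMultiplicity_mul_and_not_dvd p hp0 0
  rw [map_zero, sub_zero, X_dvd_iff] at hq
  have hqz : aeval z q * e = 0 := by
    refine eq_zero_of_pow_mul_eq_zero_of_mem_cornerCenter hprime he hz hz0 (rootMultiplicity 0 p)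
      (he.mul_eq_of_mul_mul_eq (aeval_mul_mem_cornerCenter he hz q).1) ?_
    rw [hpq, map_mul, map_pow, map_sub, aeval_X, aeval_C, map_zero, sub_zero, mul_assoc] at hpz
    exact hpz
  -- `q = X * q.divX + q.coeff 0` with `q.coeff 0 ≠ 0` exhibits the inverse of `z`
  have hdivX : z * (aeval z q.divX * e) = -(q.coeff 0 • e) := by
    have h := congrArg (fun t => aeval z t * e) (X_mul_divX_add q)
    simp only [map_add, map_mul, aeval_X, aeval_C, add_mul, hqz, mul_assoc,
      ← Algebra.smul_def] at h
    exact eq_neg_of_add_eq_zero_left h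
  have hy := aeval_mul_mem_cornerCenter he hz (-(q.coeff 0)⁻¹ • q.divX)
  have hzy : z * (aeval z (-(q.coeff 0)⁻¹ • q.divX) * e) = e := by
    rw [map_smul, smul_mul_assoc, mul_smul_comm, hdivX, smul_neg, neg_smul, neg_neg, smul_smul,
      inv_mul_cancel₀ hq, one_smul]
  exact ⟨_, hy, hzy, (hz.2 _ hy.1).symm.trans hzy⟩

theorem linearIndependent_resolvent (htr : ∀ p : k[X], p ≠ 0 → aeval z p * e ≠ 0) {w : k → R}
    (hcomm : ∀ a, Commute (w a) z) (hinv : ∀ a, w a * (aeval z (X - C a) * e) = e) :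
    LinearIndependent k w := by
  classical
  rw [linearIndependent_iff']
  intro s g hsum a ha
  have hprod : ∀ b ∈ s, w b * (aeval z (∏ μ ∈ s, (X - C μ)) * e) =
      aeval z (∏ μ ∈ s.erase b, (X - C μ)) * e := by
    intro b hb
    have hQ := Algebra.commute_of_mem_adjoin_singleton_of_commute
      (aeval_mem_adjoin_singleton k z (p := ∏ μ ∈ s.erase b, (X - C μ))) (hcomm b)
    rw [← Finset.mul_prod_erase s _ hb, mul_comm, map_mul, mul_assoc, ← mul_assoc (w b),
      hQ.eq, mul_assoc, hinv]
  refine eq_zero_of_sum_C_mul_prod_erase_eq_zero (not_not.mp fun hT => htr _ hT ?_) ha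
  calc aeval z (∑ b ∈ s, C (g b) * ∏ μ ∈ s.erase b, (X - C μ)) * e
      = ∑ b ∈ s, g b • (w b * (aeval z (∏ μ ∈ s, (X - C μ)) * e)) := by
        simp only [map_sum, map_mul, aeval_C, Finset.sum_mul, ← Algebra.smul_def, smul_mul_assoc]
        exact Finset.sum_congr rfl fun b hb => by rw [hprod b hb]
    _ = (∑ b ∈ s, g b • w b) * (aeval z (∏ μ ∈ s, (X - C μ)) * e) := by
        simp only [Finset.sum_mul, smul_mul_assoc]
    _ = 0 := by rw [hsum, zero_mul]

end Algebraic

theorem isCornerAlgebraic_of_cornerCenterIsField {k : Type*} {R : Type} [Field k] [Ring R]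
    [Algebra k R] {e z : R} (huncount : ℵ₀ < #k) (hdim : Module.rank k R ≤ ℵ₀)
    (he : IsIdempotentElem e) (hfield : CornerCenterIsField e)
    (hz : z ∈ cornerCenter e) : IsCornerAlgebraic k e z := by
  by_contra htr
  simp only [IsCornerAlgebraic, not_exists, not_and] at htr
  have hres : ∀ a : k, ∃ w : R, Commute w z ∧ w * (aeval z (X - C a) * e) = e := by
    intro a
    have hmem := aeval_mul_mem_cornerCenter he hz (X - C a)
    obtain ⟨w, -, hw, -, hinv⟩ := hfield.2 _ hmem.1 hmem.2 (htr _ (X_sub_C_ne_zero a))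
    exact ⟨w, hw z hz.1, hinv⟩
  choose w hcomm hinv using hres
  have hcard := (linearIndependent_resolvent htr hcomm hinv).cardinal_lift_le_rank
  rw [Cardinal.lift_uzero] at hcard
  exact (hcard.trans (Cardinal.lift_le_aleph0.mpr hdim)).not_gt huncount

section Sandwich

variable (k : Type*) {R : Type*} [CommRing k] [Ring R] [Algebra k R] {e z : R}

noncomputable def sandwichSum (z : R) : (R × R →₀ k) →ₗ[k] R :=
  Finsupp.linearCombination k fun q => q.1 * z * q.2

theorem sandwichSum_mapDomain_mul_left (z r : R) (t : R × R →₀ k) :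
    sandwichSum k z (t.mapDomain fun q => (r * q.1, q.2)) = r * sandwichSum k z t := by
  rw [sandwichSum, Finsupp.linearCombination_mapDomain, ← LinearMap.mulLeft_apply (R := k),
    Finsupp.apply_linearCombination]
  simp only [Function.comp_def, LinearMap.mulLeft_apply, mul_assoc]

theorem sandwichSum_mapDomain_mul_right (z r : R) (t : R × R →₀ k) :
    sandwichSum k z (t.mapDomain fun q => (q.1, q.2 * r)) = sandwichSum k z t * r := by
  rw [sandwichSum, Finsupp.linearCombination_mapDomain, ← LinearMap.mulRight_apply (R := k),
    Finsupp.apply_linearCombination]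
  simp only [Function.comp_def, LinearMap.mulRight_apply, mul_assoc]

variable {k}

theorem sandwichSum_mul_mul_eq (he : IsIdempotentElem e) (hz : z ∈ cornerCenter e)
    (t : R × R →₀ k) (x : R) : sandwichSum k z t * x * z = sandwichSum k e t * (x * (z * z)) := by
  simp only [sandwichSum, Finsupp.linearCombination_apply, Finsupp.sum_mul]
  refine Finsupp.sum_congr fun q _ => ?_
  have hez : e * (z * z) = z * z := by rw [← mul_assoc, he.mul_eq_of_mul_mul_eq hz.1]
  calc t q • (q.1 * z * q.2) * x * z = t q • (q.1 * (z * (q.2 * x) * z)) := by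
        simp only [smul_mul_assoc, mul_assoc]
    _ = t q • (q.1 * e * q.2) * (x * (z * z)) := by
        rw [mul_mul_eq_of_mem_cornerCenter he hz _ (he.mul_eq_of_mul_mul_eq hz.1)]
        simp only [smul_mul_assoc, mul_assoc, hez]

theorem sandwichSum_eq_zero_of_eq_zero (hprime : IsPrimeRing R) (he : IsIdempotentElem e)
    (hz : z ∈ cornerCenter e) (hz0 : z ≠ 0) {t : R × R →₀ k} (ht : sandwichSum k e t = 0) :
    sandwichSum k z t = 0 :=
  (hprime _ z fun x => by rw [sandwichSum_mul_mul_eq he hz, ht, zero_mul]).resolve_right hz0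

variable (k)

def sandwichIdeal (e : R) : TwoSidedIdeal R :=
  .mk' (Set.range (sandwichSum k e)) ⟨0, map_zero _⟩
    (by rintro _ _ ⟨t, rfl⟩ ⟨t', rfl⟩; exact ⟨t + t', map_add _ _ _⟩)
    (by rintro _ ⟨t, rfl⟩; exact ⟨-t, map_neg _ _⟩)
    (by rintro r _ ⟨t, rfl⟩; exact ⟨_, sandwichSum_mapDomain_mul_left k e r t⟩)
    (by rintro _ r ⟨t, rfl⟩; exact ⟨_, sandwichSum_mapDomain_mul_right k e r t⟩)

theorem mem_sandwichIdeal {x : R} : x ∈ sandwichIdeal k e ↔ ∃ t, sandwichSum k e t = x :=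
  TwoSidedIdeal.mem_mk' _ _ _ _ _ _ x

theorem self_mem_sandwichIdeal : e ∈ sandwichIdeal k e :=
  (mem_sandwichIdeal k).mpr ⟨Finsupp.single (1, 1) 1, by simp [sandwichSum]⟩

/-- `∑ aᵢ e bᵢ ↦ ∑ aᵢ z bᵢ`; the choice of preimage is irrelevant by
`sandwichSum_eq_zero_of_eq_zero`. -/
noncomputable def sandwichLift (e z : R) : R → R :=
  sandwichSum k z ∘ Function.invFun (sandwichSum k e)

variable {k}

theorem sandwichLift_sandwichSum (hprime : IsPrimeRing R) (he : IsIdempotentElem e)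
    (hz : z ∈ cornerCenter e) (hz0 : z ≠ 0) (t : R × R →₀ k) :
    sandwichLift k e z (sandwichSum k e t) = sandwichSum k z t := by
  rw [sandwichLift, Function.comp_apply, ← sub_eq_zero, ← map_sub]
  refine sandwichSum_eq_zero_of_eq_zero hprime he hz hz0 ?_
  rw [map_sub, Function.invFun_eq (f := sandwichSum k e) ⟨t, rfl⟩, sub_self]

theorem sandwichLift_self (hprime : IsPrimeRing R) (he : IsIdempotentElem e)
    (hz : z ∈ cornerCenter e) (hz0 : z ≠ 0) : sandwichLift k e z e = z := by
  simpa [sandwichSum] using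
    sandwichLift_sandwichSum hprime he hz hz0 (Finsupp.single (1, 1) (1 : k))

theorem sandwichLift_add (hprime : IsPrimeRing R) (he : IsIdempotentElem e)
    (hz : z ∈ cornerCenter e) (hz0 : z ≠ 0) {x y : R} (hx : x ∈ sandwichIdeal k e)
    (hy : y ∈ sandwichIdeal k e) :
    sandwichLift k e z (x + y) = sandwichLift k e z x + sandwichLift k e z y := by
  obtain ⟨t, rfl⟩ := (mem_sandwichIdeal k).mp hx
  obtain ⟨t', rfl⟩ := (mem_sandwichIdeal k).mp hy
  simp only [← map_add, sandwichLift_sandwichSum hprime he hz hz0]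

theorem sandwichLift_smul (hprime : IsPrimeRing R) (he : IsIdempotentElem e)
    (hz : z ∈ cornerCenter e) (hz0 : z ≠ 0) (c : k) {x : R} (hx : x ∈ sandwichIdeal k e) :
    sandwichLift k e z (c • x) = c • sandwichLift k e z x := by
  obtain ⟨t, rfl⟩ := (mem_sandwichIdeal k).mp hx
  simp only [← map_smul, sandwichLift_sandwichSum hprime he hz hz0]

theorem sandwichLift_mul_left (hprime : IsPrimeRing R) (he : IsIdempotentElem e)
    (hz : z ∈ cornerCenter e) (hz0 : z ≠ 0) (r : R) {x : R} (hx : x ∈ sandwichIdeal k e) :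
    sandwichLift k e z (r * x) = r * sandwichLift k e z x := by
  obtain ⟨t, rfl⟩ := (mem_sandwichIdeal k).mp hx
  simp only [← sandwichSum_mapDomain_mul_left, sandwichLift_sandwichSum hprime he hz hz0]

theorem sandwichLift_mul_right (hprime : IsPrimeRing R) (he : IsIdempotentElem e)
    (hz : z ∈ cornerCenter e) (hz0 : z ≠ 0) (r : R) {x : R} (hx : x ∈ sandwichIdeal k e) :
    sandwichLift k e z (x * r) = sandwichLift k e z x * r := by
  obtain ⟨t, rfl⟩ := (mem_sandwichIdeal k).mp hx
  simp only [← sandwichSum_mapDomain_mul_right, sandwichLift_sandwichSum hprime he hz hz0]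

end Sandwich

theorem isCornerAlgebraic_of_extCentroidAlgebraic {k R : Type} [Field k] [Ring R] [Algebra k R]
    {e z : R} (hprime : IsPrimeRing R) (halg : ExtCentroidAlgebraic k R) (he0 : e ≠ 0)
    (he : IsIdempotentElem e) (hz : z ∈ cornerCenter e) (hz0 : z ≠ 0) :
    IsCornerAlgebraic k e z := by
  classical
  have heI : e ∈ sandwichIdeal k e := self_mem_sandwichIdeal k
  have hI : sandwichIdeal k e ≠ ⊥ := fun h => he0 ((TwoSidedIdeal.mem_bot R).mp (h ▸ heI))
  have hL (r x : R) (hx : x ∈ sandwichIdeal k e) :=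
    sandwichLift_mul_left hprime he hz hz0 r hx
  have hR (r x : R) (hx : x ∈ sandwichIdeal k e) :=
    sandwichLift_mul_right hprime he hz hz0 r hx
  obtain ⟨n, c, hn, ⟨i, hi⟩, hrel⟩ := halg _ hI _
    (fun _ hx _ hy => sandwichLift_add hprime he hz hz0 hx hy)
    (fun c _ hx => sandwichLift_smul hprime he hz hz0 c hx) hL hR
  have hcoeff (i : Fin (n + 1)) : (ofFn (n + 1) c).coeff i = c i := ofFn_coeff_eq_val_of_lt c i.isLt
  refine ⟨ofFn (n + 1) c, fun h => hi ?_, ?_⟩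
  · rw [← hcoeff, h, coeff_zero]
  · rw [aeval_mul_eq_sum_fin (Nat.le_of_lt_succ (ofFn_natDegree_lt (Nat.succ_pos n) c))]
    simpa [iterate_eq_pow_mul hL hR heI he, sandwichLift_self hprime he hz hz0, hcoeff,
      he.pow_eq (Nat.one_le_iff_ne_zero.mp hn)] using hrel (fun _ => e) fun _ => heI

theorem extCentroidAlgebraic_of_forall_exists_cornerCenterIsField {k R : Type} [Field k] [Ring R]
    [Algebra k R] (huncount : ℵ₀ < #k) (hprime : IsPrimeRing R) (hdim : Module.rank k R ≤ ℵ₀)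
    (hfield : ∀ I : TwoSidedIdeal R, I ≠ ⊥ →
      ∃ e : R, e ∈ I ∧ IsIdempotentElem e ∧ CornerCenterIsField e) :
    ExtCentroidAlgebraic k R := by
  intro I hI f _ _ hL hR
  obtain ⟨e, heI, he, hfield⟩ := hfield I hI
  obtain ⟨p, hp0, hpz⟩ := isCornerAlgebraic_of_cornerCenterIsField huncount hdim he hfield
    (apply_mem_cornerCenter hL hR heI he)
  set n := max p.natDegree 1
  refine ⟨n, fun i => p.coeff i, le_max_right _ _,
    ⟨⟨p.natDegree, Nat.lt_succ_of_le (le_max_left _ _)⟩, leadingCoeff_ne_zero.mpr hp0⟩,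
    fun x hx => ?_⟩
  set w := (List.ofFn x).prod
  have hw (j : ℕ) (hj : j < n) : f^[j] w ∈ I := by
    simpa using iterate_list_prod_mul_mem hL j (l := List.ofFn x)
      (by simpa [List.mem_ofFn] using fun j => hx j) (by simpa using hj) 1
  refine (hprime _ e fun y => ?_).resolve_right hfield.1
  calc (∑ i : Fin (n + 1), p.coeff i • f^[i] w) * y * e
      = ∑ i : Fin (n + 1), p.coeff i • (f^[i] w * (y * e)) := by
        simp only [Finset.sum_mul, smul_mul_assoc, mul_assoc]
    _ = ∑ i : Fin (n + 1), p.coeff i • (w * (y * f e ^ (i : ℕ) * e)) :=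
        Finset.sum_congr rfl fun i _ => by
          rw [iterate_mul_mul_eq hL hR heI he i fun j hj => hw j (by omega)]
    _ = w * (y * (aeval (f e) p * e)) := by
        rw [aeval_mul_eq_sum_fin (n := n) (le_max_left _ _), Finset.mul_sum, Finset.mul_sum]
        simp only [mul_smul_comm, mul_assoc]
    _ = 0 := by rw [hpz, mul_zero, mul_zero]

/-- For an uncountable field `k` and a prime countable-dimensional
`k`-algebra `R` in which every nonzero two-sided ideal contains a nonzero
idempotent, the following are equivalent: (i) the extended centroid of `R` is
algebraic over `k`; (iii) `Z(eRe)` is a field for every nonzero idempotent `e`;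
(iv) every nonzero two-sided ideal contains a nonzero idempotent `e` with
`Z(eRe)` a field. -/
theorem equivalences_for_prime_countable_dim
    (k : Type) [Field k] (R : Type) [Ring R] [Algebra k R]
    (huncount : Cardinal.aleph0 < Cardinal.mk k)
    (hprime : ∀ a b : R, (∀ x : R, a * x * b = 0) → a = 0 ∨ b = 0)
    (hdim : Module.rank k R ≤ Cardinal.aleph0)
    (hidem : ∀ I : TwoSidedIdeal R, I ≠ ⊥ → ∃ e : R, e ∈ I ∧ e ≠ 0 ∧ e * e = e) :
    (ExtCentroidAlgebraic k R ↔
      (∀ e : R, e ≠ 0 → e * e = e → CornerCenterIsField e)) ∧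
    ((∀ e : R, e ≠ 0 → e * e = e → CornerCenterIsField e) ↔
      (∀ I : TwoSidedIdeal R, I ≠ ⊥ →
        ∃ e : R, e ∈ I ∧ e * e = e ∧ CornerCenterIsField e)) := by
  have h_i_iii (halg : ExtCentroidAlgebraic k R) (e : R) (he0 : e ≠ 0) (he : e * e = e) :
      CornerCenterIsField e := by
    refine ⟨he0, fun z hz hcen hz0 => ?_⟩
    have hz' : z ∈ cornerCenter e := ⟨hz, hcen⟩
    obtain ⟨y, ⟨hy, hycen⟩, hzy, hyz⟩ := exists_inv_mem_cornerCenter_of_isCornerAlgebraic hprime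
      he hz' hz0 (isCornerAlgebraic_of_extCentroidAlgebraic hprime halg he0 he hz' hz0)
    exact ⟨y, hy, hycen, hzy, hyz⟩
  have h_iii_iv (h : ∀ e : R, e ≠ 0 → e * e = e → CornerCenterIsField e) (I : TwoSidedIdeal R)
      (hI : I ≠ ⊥) : ∃ e : R, e ∈ I ∧ e * e = e ∧ CornerCenterIsField e := by
    obtain ⟨e, heI, he0, he⟩ := hidem I hI
    exact ⟨e, heI, he, h e he0 he⟩
  have h_iv_i := extCentroidAlgebraic_of_forall_exists_cornerCenterIsField huncount hprime hdim
  exact ⟨⟨h_i_iii, h_iv_i ∘ h_iii_iv⟩, ⟨h_iii_iv, h_i_iii ∘ h_iv_i⟩⟩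
end
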